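/- For any graph G, if k ≥ deg(G) + 1 (degeneracy plus one), then G is k-Kempe-mixing: any two proper k-colourings are connected by a sequence of Kempe chain recolourings. -/

import Mathlib

/-- `c` is a proper `k`-colouring of `G`. -/
def IsProperColoring {V : Type} (G : SimpleGraph V) {k : ℕ} (c : V → Fin k) : Prop :=
  ∀ ⦃u v : V⦄, G.Adj u v → c u ≠ c v

/-- A single-vertex recolouring step between proper `k`-colourings. -/
def RecolStep {V : Type} (G : SimpleGraph V) {k : ℕ} (c c' : V → Fin k) : Prop :=
  IsProperColoring G c ∧ IsProperColoring G c' ∧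
    ∃ v : V, c v ≠ c' v ∧ ∀ w : V, w ≠ v → c w = c' w

/-- `G` is `k`-mixing: any two proper `k`-colourings are connected by
single-vertex recolourings. -/
def IsMixing {V : Type} (G : SimpleGraph V) (k : ℕ) : Prop :=
  ∀ c c' : V → Fin k, IsProperColoring G c → IsProperColoring G c' →
    Relation.ReflTransGen (RecolStep G) c c'
/-- Swap colours `a` and `b` on the set `S`. -/
noncomputable def kempeSwap {V : Type} {k : ℕ} (c : V → Fin k) (a b : Fin k) (S : Set V) :
    V → Fin k := by
  classical
  exact fun v => if v ∈ S then (if c v = a then b else if c v = b then a else c v) else c v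

/-- `S` is a Kempe chain of the colouring `c` for colours `a`, `b`: a connected
component of the subgraph induced on the vertices coloured `a` or `b`. -/
def IsKempeChain {V : Type} (G : SimpleGraph V) {k : ℕ} (c : V → Fin k) (a b : Fin k)
    (S : Set V) : Prop :=
  ∃ v₀ : V, (c v₀ = a ∨ c v₀ = b) ∧
    S = {v | Relation.ReflTransGen
          (fun x y => (c x = a ∨ c x = b) ∧ (c y = a ∨ c y = b) ∧ G.Adj x y) v₀ v}

/-- A Kempe chain recolouring step between proper `k`-colourings. -/
def KempeStep {V : Type} (G : SimpleGraph V) {k : ℕ} (c c' : V → Fin k) : Prop :=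
  IsProperColoring G c ∧ IsProperColoring G c' ∧
    ∃ (a b : Fin k) (S : Set V), a ≠ b ∧ IsKempeChain G c a b S ∧ c' = kempeSwap c a b S

/-- `G` is `k`-Kempe-mixing. -/
def IsKempeMixing {V : Type} (G : SimpleGraph V) (k : ℕ) : Prop :=
  ∀ c c' : V → Fin k, IsProperColoring G c → IsProperColoring G c' →
    Relation.ReflTransGen (KempeStep G) c c'
/-- `G` is `d`-degenerate: every (induced sub)finset has a vertex with at most `d`
neighbours inside it. -/
def Degenerate {V : Type} [DecidableEq V] (G : SimpleGraph V) [DecidableRel G.Adj] (d : ℕ) : Prop :=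
  ∀ S : Finset V, S.Nonempty → ∃ v ∈ S, (S.filter (G.Adj v)).card ≤ d

set_option linter.unusedSectionVars false

section Aux

variable {V : Type} [DecidableEq V] {k : ℕ}

/-- The Kempe relation. -/
def KRel (G : SimpleGraph V) (c : V → Fin k) (a b : Fin k) (x y : V) : Prop :=
  (c x = a ∨ c x = b) ∧ (c y = a ∨ c y = b) ∧ G.Adj x y

lemma KRel.symm {G : SimpleGraph V} {c : V → Fin k} {a b : Fin k} {x y : V}
    (h : KRel G c a b x y) : KRel G c a b y x :=
  ⟨h.2.1, h.1, h.2.2.symm⟩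

/-- Reachability set. -/
def KReach (G : SimpleGraph V) (c : V → Fin k) (a b : Fin k) (v₀ : V) : Set V :=
  {x | Relation.ReflTransGen (KRel G c a b) v₀ x}

lemma isKempeChain_kreach {G : SimpleGraph V} {c : V → Fin k} {a b : Fin k} {v₀ : V}
    (h₀ : c v₀ = a ∨ c v₀ = b) : IsKempeChain G c a b (KReach G c a b v₀) :=
  ⟨v₀, h₀, rfl⟩

lemma kempeSwap_mem {c : V → Fin k} {a b : Fin k} {S : Set V} {x : V} (h : x ∈ S) :
    kempeSwap c a b S x = if c x = a then b else if c x = b then a else c x := by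
  simp [kempeSwap, h]

lemma kempeSwap_not_mem {c : V → Fin k} {a b : Fin k} {S : Set V} {x : V} (h : x ∉ S) :
    kempeSwap c a b S x = c x := by
  simp [kempeSwap, h]

lemma kreach_colour {G : SimpleGraph V} {c : V → Fin k} {a b : Fin k} {v₀ x : V}
    (h₀ : c v₀ = a ∨ c v₀ = b) (h : x ∈ KReach G c a b v₀) : c x = a ∨ c x = b := by
  induction h with
  | refl => exact h₀
  | tail _ h2 _ => exact h2.2.1

lemma kreach_closed {G : SimpleGraph V} {c : V → Fin k} {a b : Fin k} {v₀ x y : V}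
    (h₀ : c v₀ = a ∨ c v₀ = b) (hx : x ∈ KReach G c a b v₀) (hadj : G.Adj x y)
    (hy : c y = a ∨ c y = b) : y ∈ KReach G c a b v₀ :=
  Relation.ReflTransGen.tail hx ⟨kreach_colour h₀ hx, hy, hadj⟩

lemma kempeSwap_proper {G : SimpleGraph V} {c : V → Fin k} (hc : IsProperColoring G c)
    {a b : Fin k} (hab : a ≠ b) {v₀ : V} (h₀ : c v₀ = a ∨ c v₀ = b) :
    IsProperColoring G (kempeSwap c a b (KReach G c a b v₀)) := by
  intro u w hadj
  have hne := hc hadj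
  have swa : (if a = a then b else if a = b then a else a) = b := by simp
  have swb : (if b = a then b else if b = b then a else b) = a := by simp [Ne.symm hab]
  by_cases hu : u ∈ KReach G c a b v₀ <;> by_cases hw : w ∈ KReach G c a b v₀
  · rw [kempeSwap_mem hu, kempeSwap_mem hw]
    rcases kreach_colour h₀ hu with h1 | h1 <;> rcases kreach_colour h₀ hw with h2 | h2 <;>
        rw [h1, h2] at hne <;> rw [h1, h2]
    · exact absurd rfl hne
    · rw [swa, swb]; exact Ne.symm hab
    · rw [swb, swa]; exact hab
    · exact absurd rfl hne
  · have hcw : ¬(c w = a ∨ c w = b) := fun h => hw (kreach_closed h₀ hu hadj h)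
    rw [kempeSwap_mem hu, kempeSwap_not_mem hw]
    rcases kreach_colour h₀ hu with h1 | h1 <;> rw [h1]
    · rw [swa]; exact fun hh => hcw (Or.inr hh.symm)
    · rw [swb]; exact fun hh => hcw (Or.inl hh.symm)
  · have hcu : ¬(c u = a ∨ c u = b) := fun h => hu (kreach_closed h₀ hw hadj.symm h)
    rw [kempeSwap_not_mem hu, kempeSwap_mem hw]
    rcases kreach_colour h₀ hw with h2 | h2 <;> rw [h2]
    · rw [swa]; exact fun hh => hcu (Or.inr hh)
    · rw [swb]; exact fun hh => hcu (Or.inl hh)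
  · rw [kempeSwap_not_mem hu, kempeSwap_not_mem hw]; exact hne

/-- Recolouring a single vertex to a colour absent from its neighbourhood is a Kempe step. -/
lemma recolor_step {G : SimpleGraph V} {c : V → Fin k} (hc : IsProperColoring G c)
    (v : V) (e : Fin k) (he : e ≠ c v) (hN : ∀ u, G.Adj v u → c u ≠ e) :
    KempeStep G c (Function.update c v e) := by
  have hreach : KReach G c (c v) e v = {x | x = v} := by
    ext x
    constructor
    · intro h
      induction h with
      | refl => rfl
      | tail _ h2 ih =>
        exfalso
        rcases h2 with ⟨_, hy, hadj⟩
        rw [Set.mem_setOf_eq] at ih; subst ih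
        rcases hy with hy | hy
        · exact hc hadj hy.symm
        · exact hN _ hadj hy
    · intro h; rw [Set.mem_setOf_eq] at h; subst h; exact Relation.ReflTransGen.refl
  have h₀ : c v = c v ∨ c v = e := Or.inl rfl
  have heq : Function.update c v e = kempeSwap c (c v) e (KReach G c (c v) e v) := by
    funext x
    by_cases hx : x = v
    · subst hx
      rw [Function.update_self, kempeSwap_mem (by rw [hreach]; exact rfl)]
      simp
    · rw [Function.update_of_ne hx, kempeSwap_not_mem (by rw [hreach]; exact hx)]
  refine ⟨hc, ?_, c v, e, KReach G c (c v) e v, Ne.symm he, isKempeChain_kreach h₀, heq⟩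
  rw [heq]
  exact kempeSwap_proper hc (Ne.symm he) h₀

end Aux

section Lift

variable {V : Type} [DecidableEq V] {k : ℕ}

/-- Correspondence between Kempe chains in `G` and in `G - v`, when `v` is either
isolated in the `{a,b}`-subgraph or has a unique neighbour there. -/
lemma chain_agree (G : SimpleGraph V) (v : V) (a b : Fin k)
    (c₁ : {u : V // u ≠ v} → Fin k) (γ : V → Fin k)
    (hres : ∀ u : {u : V // u ≠ v}, γ ↑u = c₁ u)
    (hiso : (∀ x, ¬ KRel G γ a b v x) ∨
      (∃ w, (G.Adj v w ∧ (γ w = a ∨ γ w = b)) ∧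
        ∀ x, G.Adj v x → (γ x = a ∨ γ x = b) → x = w))
    (v₀ u : {u : V // u ≠ v}) :
    ↑u ∈ KReach G γ a b ↑v₀ ↔
      u ∈ KReach (G.comap ((↑) : {u : V // u ≠ v} → V)) c₁ a b v₀ := by
  have hstep : ∀ (p q : {u : V // u ≠ v}), KRel G γ a b ↑p ↑q →
      KRel (G.comap ((↑) : {u : V // u ≠ v} → V)) c₁ a b p q := by
    intro p q h
    exact ⟨by rw [← hres p]; exact h.1, by rw [← hres q]; exact h.2.1, h.2.2⟩
  constructor
  · intro h
    rcases hiso with hiso | ⟨w, ⟨hwadj, hwcol⟩, huniq⟩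
    · have key : ∀ x, x ∈ KReach G γ a b ↑v₀ →
          ∀ hx : x ≠ v, (⟨x, hx⟩ : {u : V // u ≠ v}) ∈ KReach (G.comap ((↑) : {u : V // u ≠ v} → V)) c₁ a b v₀ := by
        intro x h
        induction h with
        | refl => intro hx; rw [Subtype.coe_eta]; exact Relation.ReflTransGen.refl
        | @tail x' y' h1 h2 ih =>
          intro hy
          have hx' : x' ≠ v := by
            intro hxv; rw [hxv] at h2; exact hiso y' h2
          exact Relation.ReflTransGen.tail (ih hx') (hstep ⟨x', hx'⟩ ⟨y', hy⟩ h2)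
      have := key _ h u.2
      rwa [Subtype.coe_eta] at this
    · have hwv : w ≠ v := hwadj.ne'
      have key : ∀ x, x ∈ KReach G γ a b ↑v₀ →
          (∀ hx : x ≠ v, (⟨x, hx⟩ : {u : V // u ≠ v}) ∈ KReach (G.comap ((↑) : {u : V // u ≠ v} → V)) c₁ a b v₀) ∧
            (x = v → (⟨w, hwv⟩ : {u : V // u ≠ v}) ∈ KReach (G.comap ((↑) : {u : V // u ≠ v} → V)) c₁ a b v₀) := by
        intro x h
        induction h with
        | refl =>
          refine ⟨fun hx => ?_, fun hv => absurd hv v₀.2⟩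
          rw [Subtype.coe_eta]; exact Relation.ReflTransGen.refl
        | @tail x' y' h1 h2 ih =>
          constructor
          · intro hy
            by_cases hx' : x' = v
            · rw [hx'] at h2
              have hyw : y' = w := huniq y' h2.2.2 h2.2.1
              have heq : (⟨y', hy⟩ : {u : V // u ≠ v}) = ⟨w, hwv⟩ := Subtype.ext hyw
              rw [heq]
              exact ih.2 hx'
            · exact Relation.ReflTransGen.tail (ih.1 hx') (hstep ⟨x', hx'⟩ ⟨y', hy⟩ h2)
          · intro hyv
            rw [hyv] at h2
            have hx' : x' ≠ v := h2.2.2.ne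
            have hxw : x' = w := huniq x' h2.2.2.symm h2.1
            have heq : (⟨w, hwv⟩ : {u : V // u ≠ v}) = ⟨x', hx'⟩ := Subtype.ext hxw.symm
            rw [heq]
            exact ih.1 hx'
      have := (key _ h).1 u.2
      rwa [Subtype.coe_eta] at this
  · intro h
    have := Relation.ReflTransGen.lift (p := KRel G γ a b) (r := KRel (G.comap ((↑) : {u : V // u ≠ v} → V)) c₁ a b) (Subtype.val : {u : V // u ≠ v} → V)
      (fun p q hpq => ⟨by rw [hres p]; exact hpq.1, by rw [hres q]; exact hpq.2.1, hpq.2.2⟩) _ _ h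
    exact this

end Lift

section LiftKempe

variable {V : Type} [DecidableEq V] [Fintype V] {k d : ℕ}

lemma lift_kempe (G : SimpleGraph V) [DecidableRel G.Adj] (hk : d + 1 ≤ k)
    (v : V) (hvdeg : (Finset.univ.filter (G.Adj v)).card ≤ d)
    (c₁ c₂ : {u : V // u ≠ v} → Fin k)
    (hstep : KempeStep (G.comap ((↑) : {u : V // u ≠ v} → V)) c₁ c₂)
    (γ : V → Fin k) (hγ : IsProperColoring G γ)
    (hres : ∀ u : {u : V // u ≠ v}, γ ↑u = c₁ u) :
    ∃ γ₂ : V → Fin k, IsProperColoring G γ₂ ∧ (∀ u : {u : V // u ≠ v}, γ₂ ↑u = c₂ u) ∧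
      Relation.ReflTransGen (KempeStep G) γ γ₂ := by
  obtain ⟨hc₁, hc₂, a, b, S', hab, ⟨v₀, h₀, hS'⟩, hc₂eq⟩ := hstep
  have hS'' : S' = KReach (G.comap ((↑) : {u : V // u ≠ v} → V)) c₁ a b v₀ := hS'
  have key : ∀ γ' : V → Fin k, IsProperColoring G γ' →
      (∀ u : {u : V // u ≠ v}, γ' ↑u = c₁ u) →
      ((∀ x, ¬ KRel G γ' a b v x) ∨
        (∃ w, (G.Adj v w ∧ (γ' w = a ∨ γ' w = b)) ∧
          ∀ x, G.Adj v x → (γ' x = a ∨ γ' x = b) → x = w)) →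
      ∃ γ₂, IsProperColoring G γ₂ ∧ (∀ u : {u : V // u ≠ v}, γ₂ ↑u = c₂ u) ∧
        KempeStep G γ' γ₂ := by
    intro γ' hp hr hiso
    have h₀' : γ' ↑v₀ = a ∨ γ' ↑v₀ = b := by rw [hr v₀]; exact h₀
    refine ⟨kempeSwap γ' a b (KReach G γ' a b ↑v₀), kempeSwap_proper hp hab h₀', ?_,
      hp, kempeSwap_proper hp hab h₀', a, b, KReach G γ' a b ↑v₀, hab,
      isKempeChain_kreach h₀', rfl⟩
    intro u
    have hiff := chain_agree G v a b c₁ γ' hr hiso v₀ u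
    rw [hc₂eq, hS'']
    by_cases hu : u ∈ KReach (G.comap ((↑) : {u : V // u ≠ v} → V)) c₁ a b v₀
    · rw [kempeSwap_mem (hiff.mpr hu), kempeSwap_mem hu, hr u]
    · rw [kempeSwap_not_mem (fun hh => hu (hiff.mp hh)), kempeSwap_not_mem hu]
      exact hr u
  by_cases h1 : γ v = a ∨ γ v = b
  · obtain ⟨q, hqab, hqv, hqq⟩ :
        ∃ q, (q = a ∨ q = b) ∧ q ≠ γ v ∧ (∀ e, (e = a ∨ e = b) → e ≠ γ v → e = q) := by
      rcases h1 with h | h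
      · refine ⟨b, Or.inr rfl, by rw [h]; exact Ne.symm hab, ?_⟩
        intro e he hne
        rcases he with he | he
        · exact absurd (he.trans h.symm) hne
        · exact he
      · refine ⟨a, Or.inl rfl, by rw [h]; exact hab, ?_⟩
        intro e he hne
        rcases he with he | he
        · exact he
        · exact absurd (he.trans h.symm) hne
    by_cases h2 : ∃ e : Fin k, e ∉ (Finset.univ.filter (G.Adj v)).image γ ∧ e ≠ a ∧ e ≠ b
    · obtain ⟨e, heF, hea, heb⟩ := h2
      have hev : e ≠ γ v := by rcases h1 with h | h <;> rw [h] <;> assumption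
      have hNe : ∀ u, G.Adj v u → γ u ≠ e := by
        intro u hadj hh
        exact heF (Finset.mem_image.mpr
          ⟨u, Finset.mem_filter.mpr ⟨Finset.mem_univ _, hadj⟩, hh⟩)
      have hstep1 := recolor_step hγ v e hev hNe
      have hp' : IsProperColoring G (Function.update γ v e) := hstep1.2.1
      have hr' : ∀ u : {u : V // u ≠ v}, Function.update γ v e ↑u = c₁ u := fun u => by
        rw [Function.update_of_ne u.2]; exact hres u
      have hiso : ∀ x, ¬ KRel G (Function.update γ v e) a b v x := by
        intro x hx
        rcases hx.1 with h | h <;> rw [Function.update_self] at h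
        · exact hea h
        · exact heb h
      obtain ⟨γ₂, hp2, hr2, hs⟩ := key _ hp' hr' (Or.inl hiso)
      exact ⟨γ₂, hp2, hr2, (Relation.ReflTransGen.single hstep1).tail hs⟩
    · by_cases h3 : ∃ u, G.Adj v u ∧ γ u = q
      · obtain ⟨w, hwadj, hwq⟩ := h3
        have hqmemimg : q ∈ (Finset.univ.filter (G.Adj v)).image γ :=
          Finset.mem_image.mpr ⟨w, Finset.mem_filter.mpr ⟨Finset.mem_univ _, hwadj⟩, hwq⟩
        have hsub : ∀ e : Fin k, e ≠ γ v → e ∈ (Finset.univ.filter (G.Adj v)).image γ := by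
          intro e hev
          by_cases heF : e ∈ (Finset.univ.filter (G.Adj v)).image γ
          · exact heF
          · have hab' : e = a ∨ e = b := by
              by_contra hcon
              push_neg at hcon
              exact h2 ⟨e, heF, hcon.1, hcon.2⟩
            rw [hqq e hab' hev]
            exact hqmemimg
        have hcard1 : k - 1 ≤ ((Finset.univ.filter (G.Adj v)).image γ).card := by
          have hss : Finset.univ.erase (γ v) ⊆ (Finset.univ.filter (G.Adj v)).image γ :=
            fun e he => hsub e (Finset.ne_of_mem_erase he)
          calc k - 1 = (Finset.univ.erase (γ v)).card := by
                rw [Finset.card_erase_of_mem (Finset.mem_univ _), Finset.card_univ,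
                  Fintype.card_fin]
            _ ≤ _ := Finset.card_le_card hss
        have hcard2 : ((Finset.univ.filter (G.Adj v)).image γ).card ≤
            (Finset.univ.filter (G.Adj v)).card := Finset.card_image_le
        have hcc : ((Finset.univ.filter (G.Adj v)).image γ).card =
            (Finset.univ.filter (G.Adj v)).card := by omega
        have hinj := Finset.card_image_iff.mp hcc
        have huniq : ∀ x, G.Adj v x → (γ x = a ∨ γ x = b) → x = w := by
          intro x hadj hcol
          have hxq : γ x = q := hqq _ hcol (hγ hadj).symm
          exact hinj (Finset.mem_coe.mpr (Finset.mem_filter.mpr ⟨Finset.mem_univ _, hadj⟩))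
            (Finset.mem_coe.mpr (Finset.mem_filter.mpr ⟨Finset.mem_univ _, hwadj⟩))
            (by rw [hxq, hwq])
        obtain ⟨γ₂, hp2, hr2, hs⟩ := key γ hγ hres
          (Or.inr ⟨w, ⟨hwadj, by rw [hwq]; exact hqab⟩, huniq⟩)
        exact ⟨γ₂, hp2, hr2, Relation.ReflTransGen.single hs⟩
      · have hiso : ∀ x, ¬ KRel G γ a b v x := by
          rintro x ⟨-, hcx, hadj⟩
          exact h3 ⟨x, hadj, hqq _ hcx (hγ hadj).symm⟩
        obtain ⟨γ₂, hp2, hr2, hs⟩ := key γ hγ hres (Or.inl hiso)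
        exact ⟨γ₂, hp2, hr2, Relation.ReflTransGen.single hs⟩
  · have hiso : ∀ x, ¬ KRel G γ a b v x := fun x hx => h1 hx.1
    obtain ⟨γ₂, hp2, hr2, hs⟩ := key γ hγ hres (Or.inl hiso)
    exact ⟨γ₂, hp2, hr2, Relation.ReflTransGen.single hs⟩

end LiftKempe

section Main

instance decRelComap {V W : Type} (G : SimpleGraph V) [DecidableRel G.Adj] (f : W → V) :
    DecidableRel (G.comap f).Adj :=
  fun p q => inferInstanceAs (Decidable (G.Adj (f p) (f q)))

lemma degenerate_comap {V : Type} [DecidableEq V] (G : SimpleGraph V) [DecidableRel G.Adj]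
    {d : ℕ} (hdeg : Degenerate G d) (v : V) :
    Degenerate (G.comap ((↑) : {u : V // u ≠ v} → V)) d := by
  intro S hS
  have hT : (S.image Subtype.val).Nonempty := hS.image _
  obtain ⟨x, hxT, hx⟩ := hdeg _ hT
  obtain ⟨u, huS, hux⟩ := Finset.mem_image.mp hxT
  refine ⟨u, huS, ?_⟩
  have hmap : (S.filter ((G.comap ((↑) : {u : V // u ≠ v} → V)).Adj u)).image Subtype.val ⊆
      (S.image Subtype.val).filter (G.Adj x) := by
    intro y hy
    obtain ⟨p, hp, hpy⟩ := Finset.mem_image.mp hy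
    obtain ⟨hpS, hpadj⟩ := Finset.mem_filter.mp hp
    refine Finset.mem_filter.mpr ⟨Finset.mem_image.mpr ⟨p, hpS, hpy⟩, ?_⟩
    rw [← hux, ← hpy]
    exact hpadj
  calc (S.filter ((G.comap ((↑) : {u : V // u ≠ v} → V)).Adj u)).card
      = ((S.filter ((G.comap ((↑) : {u : V // u ≠ v} → V)).Adj u)).image Subtype.val).card :=
        (Finset.card_image_of_injective _ Subtype.val_injective).symm
    _ ≤ ((S.image Subtype.val).filter (G.Adj x)).card := Finset.card_le_card hmap
    _ ≤ d := hx

theorem aux_mixing : ∀ (n : ℕ) (V : Type) [Fintype V] [DecidableEq V] (G : SimpleGraph V)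
    [DecidableRel G.Adj] (d k : ℕ), Fintype.card V ≤ n → Degenerate G d → d + 1 ≤ k →
    IsKempeMixing G k := by
  intro n
  induction n with
  | zero =>
    intro V _ _ G _ d k hcard hdeg hk c c' hc hc'
    have hemp : IsEmpty V := Fintype.card_eq_zero_iff.mp (Nat.le_zero.mp hcard)
    have : c = c' := funext fun x => (hemp.elim x)
    exact this ▸ Relation.ReflTransGen.refl
  | succ n ih =>
    intro V _ _ G _ d k hcard hdeg hk c c' hc hc'
    cases isEmpty_or_nonempty V with
    | inl hemp =>
      have : c = c' := funext fun x => (hemp.elim x)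
      exact this ▸ Relation.ReflTransGen.refl
    | inr hne =>
      obtain ⟨v, -, hvdeg⟩ := hdeg Finset.univ Finset.univ_nonempty
      have hcard' : Fintype.card {u : V // u ≠ v} ≤ n := by
        have h2 : Fintype.card {u : V // u ≠ v} < Fintype.card V :=
          Fintype.card_subtype_lt (p := fun u => u ≠ v) (x := v) (by simp)
        omega
      have hdeg' := degenerate_comap G hdeg v
      have hprop : ∀ c0 : V → Fin k, IsProperColoring G c0 →
          IsProperColoring (G.comap ((↑) : {u : V // u ≠ v} → V)) (fun u => c0 ↑u) :=
        fun c0 h p q hadj => h hadj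
      have hrt := ih {u : V // u ≠ v} (G.comap ((↑) : {u : V // u ≠ v} → V)) d k
        hcard' hdeg' hk _ _ (hprop c hc) (hprop c' hc')
      have sim : ∀ c₂ : {u : V // u ≠ v} → Fin k,
          Relation.ReflTransGen (KempeStep (G.comap ((↑) : {u : V // u ≠ v} → V)))
            (fun u => c ↑u) c₂ →
          ∃ γ₂, IsProperColoring G γ₂ ∧ (∀ u : {u : V // u ≠ v}, γ₂ ↑u = c₂ u) ∧
            Relation.ReflTransGen (KempeStep G) c γ₂ := by
        intro c₂ h
        induction h with
        | refl => exact ⟨c, hc, fun u => rfl, Relation.ReflTransGen.refl⟩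
        | @tail cmid cend h1 h2 ih2 =>
          obtain ⟨γ, hp, hr, hrt0⟩ := ih2
          obtain ⟨γ₂, hp2, hr2, hrt2⟩ := lift_kempe G hk v hvdeg cmid cend h2 γ hp hr
          exact ⟨γ₂, hp2, hr2, hrt0.trans hrt2⟩
      obtain ⟨γ₂, hp2, hr2, hrt2⟩ := sim _ hrt
      by_cases hfin : γ₂ v = c' v
      · have heq : γ₂ = c' := by
          funext x
          by_cases hx : x = v
          · rw [hx]; exact hfin
          · exact hr2 ⟨x, hx⟩
        rwa [heq] at hrt2
      · have hNe : ∀ u, G.Adj v u → γ₂ u ≠ c' v := by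
          intro u hadj
          have hr2' : γ₂ u = c' u := hr2 ⟨u, hadj.ne'⟩
          intro hh
          exact hc' hadj (hr2'.symm.trans hh).symm
        have hstepf := recolor_step hp2 v (c' v) (Ne.symm hfin) hNe
        have heq : Function.update γ₂ v (c' v) = c' := by
          funext x
          by_cases hx : x = v
          · rw [hx, Function.update_self]
          · rw [Function.update_of_ne hx]; exact hr2 ⟨x, hx⟩
        rw [← heq]
        exact hrt2.tail hstepf

end Main


/-- If `G` has degeneracy at most `d` and `k ≥ d + 1`, then `G` is `k`-Kempe-mixing. -/
theorem degeneracy_kempe_mixing {V : Type} [Fintype V] [DecidableEq V]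
    (G : SimpleGraph V) [DecidableRel G.Adj] (d k : ℕ)
    (hdeg : Degenerate G d) (hk : d + 1 ≤ k) : IsKempeMixing G k := by
  exact aux_mixing (Fintype.card V) V G d k le_rfl hdeg hk
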